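/- arXiv:2305.12337 — 3 statements merged into one kernel-verified Lean document; each statement's English description precedes it below -/
import Mathlib

section
/- Let A be a subring of a commutative ring B, and let J := {a ∈ A : a·b ∈ A for all b ∈ B} be the conductor of A in B (an ideal of both A and B). Assume that J is a radical ideal of B, i.e., J equals its own radical in B. Let I be an ideal of B such that I ⊆ J and such that I, viewed as an ideal of A, is a radical ideal of A. Then I is a radical ideal of B, i.e., for every b ∈ B, if b^n ∈ I for some positive integer n, then b ∈ I. -/
/-- The conductor of a subring `A` of a commutative ring `B`:
`J = {a ∈ A : a·b ∈ A for all b ∈ B}`, realized as the ideal `{b : B | ∀ x, b * x ∈ A}`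
of `B` (note every such `b` satisfies `b = b * 1 ∈ A`). -/
def conductorIdeal {B : Type*} [CommRing B] (A : Subring B) : Ideal B where
  carrier := {b : B | ∀ x : B, b * x ∈ A}
  zero_mem' := fun x => by simpa using A.zero_mem
  add_mem' := fun {a b} ha hb x => by
    simpa [add_mul] using A.add_mem (ha x) (hb x)
  smul_mem' := fun c b hb => by
    intro x
    rw [smul_eq_mul, show c * b * x = b * (c * x) by ring]
    exact hb (c * x)

/-- Let `A` be a subring of a commutative ring `B` and `J` the conductor of `A` in `B`.
Assume `J` is a radical ideal of `B`.  Let `I` be an ideal of `B` with `I ⊆ J` such that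
`I`, viewed as an ideal of `A`, is a radical ideal of `A`.  Then `I` is a radical ideal
of `B`: for every `b ∈ B`, if `b ^ n ∈ I` for some positive integer `n`, then `b ∈ I`. -/
theorem radical_of_radical_in_subring {B : Type*} [CommRing B] (A : Subring B)
    (hJrad : ∀ (b : B) (n : ℕ), 0 < n → b ^ n ∈ conductorIdeal A → b ∈ conductorIdeal A)
    (I : Ideal B) (hIJ : I ≤ conductorIdeal A)
    (hIArad : ∀ (a : A) (n : ℕ), 0 < n → a ^ n ∈ I.comap A.subtype →
      a ∈ I.comap A.subtype) :
    ∀ (b : B) (n : ℕ), 0 < n → b ^ n ∈ I → b ∈ I := by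
  intro b n hn hbn
  have hbJ : b ∈ conductorIdeal A := hJrad b n hn (hIJ hbn)
  have hbA : b ∈ A := by simpa using hbJ 1
  have : (⟨b, hbA⟩ : A) ∈ I.comap A.subtype := by
    apply hIArad _ n hn
    simpa [Ideal.mem_comap] using hbn
  simpa [Ideal.mem_comap] using this
end

section
/- Let A be a subring of a commutative ring B, and let J := {a ∈ A : a·b ∈ A for all b ∈ B} be the conductor of A in B. Let I be a radical ideal of A with I ⊆ J. Then the ideal I·B of B generated by I is contained in A, and its radical as an ideal of A equals I; that is, {a ∈ A : a^n ∈ I·B for some positive integer n} = I. -/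
/-- Let `A` be a subring of a commutative ring `B` and `J` the conductor of `A` in `B`.
Let `I` be a radical ideal of `A` with `I ⊆ J`.  Then the ideal `I·B` of `B` generated
by `I` is contained in `A`, and its radical as an ideal of `A` equals `I`:
`{a ∈ A : a ^ n ∈ I·B for some positive integer n} = I`. -/
theorem radical_of_extension_eq_self {B : Type*} [CommRing B] (A : Subring B)
    (I : Ideal A)
    (hIrad : ∀ (a : A) (n : ℕ), 0 < n → a ^ n ∈ I → a ∈ I)
    (hIJ : ∀ a ∈ I, (a : B) ∈ conductorIdeal A) :
    ((Ideal.map A.subtype I : Ideal B) : Set B) ⊆ (A : Set B) ∧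
    {a : A | ∃ n : ℕ, 0 < n ∧ (a : B) ^ n ∈ Ideal.map A.subtype I} = (I : Set A) := by
  -- `I·B ⊆ J` since `J` is an ideal of `B` containing the generators.
  have hmapJ : Ideal.map A.subtype I ≤ conductorIdeal A := by
    rw [Ideal.map_le_iff_le_comap]
    intro x hx
    exact hIJ x hx
  have hJA : ∀ b ∈ conductorIdeal A, b ∈ A := fun b hb => by simpa using hb 1
  have hsub : ((Ideal.map A.subtype I : Ideal B) : Set B) ⊆ (A : Set B) := by
    intro b hb
    exact hJA b (hmapJ hb)
  refine ⟨hsub, ?_⟩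
  -- key claim: products of two elements of `I·B` lie in the image of `I`.
  have key : ∀ m ∈ Ideal.map A.subtype I, ∀ n ∈ Ideal.map A.subtype I,
      ∃ y ∈ I, (y : B) = m * n := by
    intro m hm
    rw [Ideal.map, Ideal.span, Ideal.submodule_span_eq] at hm
    induction hm using Submodule.span_induction with
    | mem z hz =>
      intro n hn
      obtain ⟨x, hxI, rfl⟩ := hz
      obtain ⟨c, hc⟩ : ∃ c : A, (c : B) = n := ⟨⟨n, hJA n (hmapJ hn)⟩, rfl⟩
      refine ⟨x * c, I.mul_mem_right c hxI, ?_⟩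
      push_cast
      rw [hc]
      rfl
    | zero =>
      intro n hn
      exact ⟨0, I.zero_mem, by simp⟩
    | add u v hu hv ihu ihv =>
      intro n hn
      obtain ⟨y1, hy1, hy1'⟩ := ihu n hn
      obtain ⟨y2, hy2, hy2'⟩ := ihv n hn
      exact ⟨y1 + y2, I.add_mem hy1 hy2, by push_cast; rw [hy1', hy2']; ring⟩
    | smul b u hu ihu =>
      intro n hn
      obtain ⟨y, hy, hy'⟩ := ihu (b * n) (Ideal.mul_mem_left _ b hn)
      exact ⟨y, hy, by rw [hy']; simp [smul_eq_mul]; ring⟩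
  ext a
  simp only [Set.mem_setOf_eq, SetLike.mem_coe]
  constructor
  · rintro ⟨n, hn, hpow⟩
    obtain ⟨y, hyI, hy⟩ := key _ hpow _ hpow
    have : (y : B) = ((a ^ (n + n) : A) : B) := by
      rw [hy]; push_cast; ring
    have hy2 : y = a ^ (n + n) := Subtype.ext this
    exact hIrad a (n + n) (by omega) (hy2 ▸ hyI)
  · intro ha
    exact ⟨1, one_pos, by simpa using Ideal.mem_map_of_mem A.subtype ha⟩
end

section
/- Let A be a subring of a commutative ring B, and let J := {a ∈ A : a·b ∈ A for all b ∈ B} be the conductor of A in B. Assume that J is a radical ideal of B. Let I be a radical ideal of A with I ⊆ J. Then the ideal of B generated by I equals I itself: I·B = I. In particular, I is an ideal of B, and I is a radical ideal of B. -/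
/-- Let `A` be a subring of a commutative ring `B` and `J` the conductor of `A` in `B`.
Assume `J` is a radical ideal of `B`.  Let `I` be a radical ideal of `A` with `I ⊆ J`.
Then the ideal of `B` generated by `I` equals `I` itself (`I·B = I` as subsets of `B`),
and `I` is a radical ideal of `B`. -/
theorem extension_eq_self_and_radical {B : Type*} [CommRing B] (A : Subring B)
    (hJrad : ∀ (b : B) (n : ℕ), 0 < n → b ^ n ∈ conductorIdeal A → b ∈ conductorIdeal A)
    (I : Ideal A)
    (hIrad : ∀ (a : A) (n : ℕ), 0 < n → a ^ n ∈ I → a ∈ I)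
    (hIJ : ∀ a ∈ I, (a : B) ∈ conductorIdeal A) :
    ((Ideal.map A.subtype I : Ideal B) : Set B) = Subtype.val '' (I : Set A) ∧
    (∀ (b : B) (n : ℕ), 0 < n → b ^ n ∈ Ideal.map A.subtype I →
      b ∈ Ideal.map A.subtype I) := by
  -- key: for a ∈ I and b : B, b * a lies in (the image of) I
  have key : ∀ a ∈ I, ∀ b : B, ∃ c ∈ I, (c : B) = b * (a : B) := by
    intro a ha b
    have hba : b * (a : B) ∈ A := by
      have := hIJ a ha b
      rwa [mul_comm] at this
    set c : A := ⟨b * (a : B), hba⟩ with hc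
    have hd : (a : B) * (b * b) ∈ A := hIJ a ha (b * b)
    set d : A := ⟨(a : B) * (b * b), hd⟩ with hdd
    have hsq : c ^ 2 = a * d := by
      apply Subtype.ext
      push_cast [hc, hdd]
      ring
    have : c ∈ I := by
      refine hIrad c 2 (by norm_num) ?_
      rw [hsq]
      exact I.mul_mem_right d ha
    exact ⟨c, this, rfl⟩
  -- the image of I as an ideal of B
  let IB : Ideal B :=
    { carrier := Subtype.val '' (I : Set A)
      zero_mem' := ⟨0, I.zero_mem, rfl⟩
      add_mem' := by
        rintro x y ⟨a, ha, rfl⟩ ⟨b, hb, rfl⟩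
        exact ⟨a + b, I.add_mem ha hb, rfl⟩
      smul_mem' := by
        rintro b x ⟨a, ha, rfl⟩
        obtain ⟨c, hc, hceq⟩ := key a ha b
        exact ⟨c, hc, by simpa using hceq⟩ }
  have hmap : Ideal.map A.subtype I = IB := by
    apply le_antisymm
    · rw [Ideal.map_le_iff_le_comap]
      intro a ha
      exact ⟨a, ha, rfl⟩
    · rintro x ⟨a, ha, rfl⟩
      exact Ideal.mem_map_of_mem A.subtype ha
  constructor
  · rw [hmap]; rfl
  · intro b n hn hbn
    have hbnJ : b ^ n ∈ conductorIdeal A := by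
      rw [hmap] at hbn
      obtain ⟨a, ha, heq⟩ := hbn
      rw [← heq]; exact hIJ a ha
    have hbJ : b ∈ conductorIdeal A := hJrad b n hn hbnJ
    have hbA : b ∈ A := by simpa using hbJ 1
    set a : A := ⟨b, hbA⟩ with hav
    have han : a ^ n ∈ I := by
      rw [hmap] at hbn
      obtain ⟨c, hc, heq⟩ := hbn
      have : c = a ^ n := Subtype.ext (by push_cast [hav]; exact heq)
      rwa [this] at hc
    have : a ∈ I := hIrad a n hn han
    rw [hmap]
    exact ⟨a, this, rfl⟩
end
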